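/- Let ι be a finite index type, G : ι → ℝ, and s ∈ ℕ. Define clip(g) = max(-1, min(1, g)) and Δ(g) = g² if |g| ≤ 1 and Δ(g) = 2|g| - 1 if |g| > 1. Let T ⊆ ι be any subset with card(T) = min(s, card(ι)) such that Δ(Gᵢ) ≥ Δ(Gⱼ) for all i ∈ T and j ∉ T (i.e., T collects indices of the s largest benefit values, ties broken arbitrarily). Define w* : ι → ℝ by w*ᵢ = clip(Gᵢ) if i ∈ T and w*ᵢ = 0 otherwise. Then: (i) w* is feasible, i.e., |w*ᵢ| ≤ 1 for all i and card{i : w*ᵢ ≠ 0} ≤ s; (ii) for every w : ι → ℝ with |wᵢ| ≤ 1 for all i and card{i : wᵢ ≠ 0} ≤ s, one has Σᵢ (w*ᵢ - Gᵢ)² ≤ Σᵢ (wᵢ - Gᵢ)²; and (iii) Σᵢ (w*ᵢ - Gᵢ)² = Σᵢ Gᵢ² - Σ_{i∈T} Δ(Gᵢ). -/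
import Mathlib


open Finset

/-- Projection of a scalar onto the interval `[-1, 1]`. -/
noncomputable def clip (g : ℝ) : ℝ := max (-1) (min 1 g)

/-- The local benefit value `Δ(g)` from Lemma 4.1. -/
noncomputable def benefit (g : ℝ) : ℝ := if |g| ≤ 1 then g ^ 2 else 2 * |g| - 1

lemma benefit_nonneg (g : ℝ) : 0 ≤ benefit g := by
  unfold benefit
  split_ifs with h
  · positivity
  · push_neg at h; nlinarith [abs_nonneg g]

lemma clip_sub_sq (g : ℝ) : (clip g - g) ^ 2 = g ^ 2 - benefit g := by
  unfold clip benefit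
  rcases abs_le.mp (le_refl |g|) with ⟨h1, h2⟩
  split_ifs with h
  · rcases abs_le.mp h with ⟨ha, hb⟩
    rw [min_eq_right hb, max_eq_right ha]; ring
  · push_neg at h
    rcases lt_or_ge g 0 with hg | hg
    · rw [abs_of_neg hg] at h ⊢
      rw [min_eq_right (by linarith), max_eq_left (by linarith)]; ring
    · rw [abs_of_nonneg hg] at h ⊢
      rw [min_eq_left (by linarith), max_eq_right (by linarith)]; ring

lemma clip_abs_le (g : ℝ) : |clip g| ≤ 1 := by
  unfold clip
  rw [abs_le]
  constructor
  · exact le_max_left _ _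
  · exact max_le (by norm_num) (min_le_left _ _)

lemma pointwise_bound {w g : ℝ} (hw : |w| ≤ 1) :
    g ^ 2 - benefit g ≤ (w - g) ^ 2 := by
  unfold benefit
  rcases abs_le.mp hw with ⟨h1, h2⟩
  split_ifs with h
  · nlinarith
  · push_neg at h
    rcases lt_or_ge g 0 with hg | hg
    · rw [abs_of_neg hg] at h ⊢; nlinarith
    · rw [abs_of_nonneg hg] at h ⊢; nlinarith

lemma sum_benefit_le {ι : Type*} [DecidableEq ι] (b : ι → ℝ) (hb : ∀ i, 0 ≤ b i)
    (S T : Finset ι) (hcard : S.card ≤ T.card)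
    (htop : ∀ i ∈ T, ∀ j ∉ T, b j ≤ b i) :
    ∑ i ∈ S, b i ≤ ∑ i ∈ T, b i := by
  have hST : (S \ T).card ≤ (T \ S).card := by
    have h1 := Finset.card_sdiff_add_card_inter S T
    have h2 := Finset.card_sdiff_add_card_inter T S
    rw [Finset.inter_comm] at h2
    omega
  have key : ∑ i ∈ S \ T, b i ≤ ∑ i ∈ T \ S, b i := by
    rcases (T \ S).eq_empty_or_nonempty with he | hne
    · have h0 : (S \ T).card = 0 := by rw [he] at hST; simpa using hST
      rw [Finset.card_eq_zero.mp h0, he]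
    · obtain ⟨j0, hj0, hj0min⟩ := Finset.exists_min_image (T \ S) b hne
      have hj0T : j0 ∈ T := (Finset.mem_sdiff.mp hj0).1
      calc ∑ i ∈ S \ T, b i ≤ ∑ _i ∈ S \ T, b j0 := by
              apply Finset.sum_le_sum
              intro i hi
              exact htop j0 hj0T i (Finset.mem_sdiff.mp hi).2
        _ = (S \ T).card • b j0 := by rw [Finset.sum_const]
        _ ≤ (T \ S).card • b j0 := by
              have := hb j0
              exact nsmul_le_nsmul_left (hb j0) hST
        _ ≤ ∑ i ∈ T \ S, b i := Finset.card_nsmul_le_sum _ _ _ hj0min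
  calc ∑ i ∈ S, b i = ∑ i ∈ S ∩ T, b i + ∑ i ∈ S \ T, b i :=
        (Finset.sum_inter_add_sum_sdiff S T b).symm
    _ ≤ ∑ i ∈ S ∩ T, b i + ∑ i ∈ T \ S, b i := by linarith
    _ = ∑ i ∈ T ∩ S, b i + ∑ i ∈ T \ S, b i := by rw [Finset.inter_comm]
    _ = ∑ i ∈ T, b i := Finset.sum_inter_add_sum_sdiff T S b

/-- Lemma 4.1: the Euclidean projection onto the sparse box constraint
`{w : |wᵢ| ≤ 1 for all i, card{i : wᵢ ≠ 0} ≤ s}` is obtained by clipping to `[-1,1]` the `s`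
entries with largest benefit values and zeroing out the rest. -/
theorem sparse_box_projection {ι : Type*} [Fintype ι] [DecidableEq ι]
    (G : ι → ℝ) (s : ℕ) (T : Finset ι)
    (hTcard : T.card = min s (Fintype.card ι))
    (hTtop : ∀ i ∈ T, ∀ j ∉ T, benefit (G j) ≤ benefit (G i))
    (wstar : ι → ℝ) (hwstar : ∀ i, wstar i = if i ∈ T then clip (G i) else 0) :
    ((∀ i, |wstar i| ≤ 1) ∧ {i | wstar i ≠ 0}.ncard ≤ s) ∧
    (∀ w : ι → ℝ, (∀ i, |w i| ≤ 1) → {i | w i ≠ 0}.ncard ≤ s →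
      ∑ i, (wstar i - G i) ^ 2 ≤ ∑ i, (w i - G i) ^ 2) ∧
    (∑ i, (wstar i - G i) ^ 2 = ∑ i, (G i) ^ 2 - ∑ i ∈ T, benefit (G i)) := by
  classical
  -- (iii) first
  have hiii : ∑ i, (wstar i - G i) ^ 2 = ∑ i, (G i) ^ 2 - ∑ i ∈ T, benefit (G i) := by
    rw [← Finset.sum_add_sum_compl T (fun i => (wstar i - G i) ^ 2),
        ← Finset.sum_add_sum_compl T (fun i => (G i) ^ 2)]
    have h1 : ∑ i ∈ T, (wstar i - G i) ^ 2 = ∑ i ∈ T, ((G i) ^ 2 - benefit (G i)) := by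
      apply Finset.sum_congr rfl
      intro i hi
      rw [hwstar i, if_pos hi, clip_sub_sq]
    have h2 : ∑ i ∈ Tᶜ, (wstar i - G i) ^ 2 = ∑ i ∈ Tᶜ, (G i) ^ 2 := by
      apply Finset.sum_congr rfl
      intro i hi
      rw [hwstar i, if_neg (Finset.mem_compl.mp hi)]
      ring
    rw [h1, h2, Finset.sum_sub_distrib]
    ring
  refine ⟨⟨?_, ?_⟩, ?_, hiii⟩
  · intro i
    rw [hwstar i]
    split_ifs with h
    · exact clip_abs_le _
    · simp
  · have hsub : {i | wstar i ≠ 0} ⊆ (T : Set ι) := by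
      intro i hi
      by_contra h
      exact hi (by rw [hwstar i, if_neg (by simpa using h)])
    calc {i | wstar i ≠ 0}.ncard ≤ (T : Set ι).ncard :=
          Set.ncard_le_ncard hsub (T : Set ι).toFinite
      _ = T.card := Set.ncard_coe_finset T
      _ ≤ s := by rw [hTcard]; exact min_le_left _ _
  · intro w hw hwcard
    set S : Finset ι := Finset.univ.filter (fun i => w i ≠ 0) with hS
    have hScard : S.card ≤ T.card := by
      have hnc : {i | w i ≠ 0}.ncard = S.card := by
        rw [← Set.ncard_coe_finset S]
        congr 1
        ext i; simp [hS]
      rw [hnc] at hwcard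
      rw [hTcard]
      exact le_min hwcard (Finset.card_le_univ S)
    have hbound : ∑ i, (G i) ^ 2 - ∑ i ∈ S, benefit (G i) ≤ ∑ i, (w i - G i) ^ 2 := by
      rw [← Finset.sum_add_sum_compl S (fun i => (w i - G i) ^ 2),
          ← Finset.sum_add_sum_compl S (fun i => (G i) ^ 2)]
      have h1 : ∑ i ∈ S, ((G i) ^ 2 - benefit (G i)) ≤ ∑ i ∈ S, (w i - G i) ^ 2 :=
        Finset.sum_le_sum fun i _ => pointwise_bound (hw i)
      have h2 : ∑ i ∈ Sᶜ, (w i - G i) ^ 2 = ∑ i ∈ Sᶜ, (G i) ^ 2 := by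
        apply Finset.sum_congr rfl
        intro i hi
        have : w i = 0 := by
          have := Finset.mem_compl.mp hi
          simpa [hS] using this
        rw [this]; ring
      rw [Finset.sum_sub_distrib] at h1
      linarith
    have hmono : ∑ i ∈ S, benefit (G i) ≤ ∑ i ∈ T, benefit (G i) :=
      sum_benefit_le (fun i => benefit (G i)) (fun i => benefit_nonneg _) S T hScard
        (fun i hi j hj => hTtop i hi j hj)
    rw [hiii]
    linarith
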